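/- Let A₁, A₂, A₃ ∈ ℂ[x,y,z] be polynomials, each a product of linear forms, with A₁ nonconstant, such that all the occurring linear forms are pairwise non-proportional and for every nonzero P ∈ ℂ³ at most 3 of the forms vanish at P. Suppose there exist nonzero homogeneous polynomials f, g, h ∈ ℂ[x,y,z] with A₁f³ + A₂g³ + A₃h³ = 0. Then for every nonzero point P ∈ ℂ³: if A₁(P) = 0 and A₂(P) = 0 then A₃(P) = 0, and if A₁(P) = 0 and A₃(P) = 0 then A₂(P) = 0. In other words, every intersection point of the curve A₁ = 0 with one of the curves A₂ = 0, A₃ = 0 also lies on the other. -/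

import Mathlib

open MvPolynomial

noncomputable abbrev MvP := MvPolynomial (Fin 3) ℂ

section CatalanAux
open Polynomial

lemma deg_one_single (m : Fin 3 →₀ ℕ) (h : Finsupp.degree m = 1) :
    ∃ i, m = Finsupp.single i 1 := by
  have hsum : ∑ i : Fin 3, m i = 1 := by
    rw [Finsupp.degree] at h
    rw [← h]
    exact (Finset.sum_subset (Finset.subset_univ _) (by
      intro x _ hx
      simpa using (Finsupp.notMem_support_iff.mp hx))).symm
  have h3 : m 0 + m 1 + m 2 = 1 := by
    rw [Fin.sum_univ_three] at hsum; exact hsum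
  have : (m 0 = 1 ∧ m 1 = 0 ∧ m 2 = 0) ∨ (m 0 = 0 ∧ m 1 = 1 ∧ m 2 = 0) ∨
      (m 0 = 0 ∧ m 1 = 0 ∧ m 2 = 1) := by omega
  rcases this with ⟨a,b,c⟩|⟨a,b,c⟩|⟨a,b,c⟩
  · exact ⟨0, by ext j; fin_cases j <;> simp [Finsupp.single_apply, a, b, c]⟩
  · exact ⟨1, by ext j; fin_cases j <;> simp [Finsupp.single_apply, a, b, c]⟩
  · exact ⟨2, by ext j; fin_cases j <;> simp [Finsupp.single_apply, a, b, c]⟩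

noncomputable def Phi (P : Fin 3 → ℂ) : MvP →+* Polynomial MvP :=
  (MvPolynomial.aeval (fun i => Polynomial.C (MvPolynomial.X i) * Polynomial.X
      + Polynomial.C (MvPolynomial.C (P i)))).toRingHom

lemma Phi_C (P : Fin 3 → ℂ) (a : ℂ) : Phi P (MvPolynomial.C a) = Polynomial.C (MvPolynomial.C a) := by
  simp [Phi, algebraMap_eq]

lemma Phi_inj (P : Fin 3 → ℂ) : Function.Injective (Phi P) := by
  have key : ((MvPolynomial.aeval (fun i => MvPolynomial.X i - MvPolynomial.C (P i)) :
      MvP →ₐ[ℂ] MvP).toRingHom.comp ((Polynomial.evalRingHom 1).comp (Phi P))) = RingHom.id MvP := by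
    apply MvPolynomial.ringHom_ext
    · intro a; simp [Phi, algebraMap_eq]
    · intro i; simp [Phi]
  intro p q hpq
  have := congrArg (fun r => (MvPolynomial.aeval (fun i => MvPolynomial.X i - MvPolynomial.C (P i)) :
      MvP →ₐ[ℂ] MvP) (Polynomial.eval 1 r)) hpq
  simpa using (congrArg (· p) key).symm.trans (this.trans (congrArg (· q) key))

lemma Phi_linear (P : Fin 3 → ℂ) (l : MvP) (hl : l.IsHomogeneous 1) :
    Phi P l = Polynomial.C l * Polynomial.X + Polynomial.C (MvPolynomial.C (MvPolynomial.eval P l)) := by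
  have key := Finset.sum_induction (fun m => monomial m (MvPolynomial.coeff m l))
    (fun q : MvP => Phi P q = Polynomial.C q * Polynomial.X
      + Polynomial.C (MvPolynomial.C (MvPolynomial.eval P q)))
    (by
      intro a b ha hb
      simp only [map_add, ha, hb]
      ring)
    (by simp)
    (by
      intro m hm
      obtain ⟨i, rfl⟩ := deg_one_single m (by
        by_contra hne
        exact MvPolynomial.mem_support_iff.mp hm (hl.coeff_eq_zero hne))
      have : (MvPolynomial.monomial (Finsupp.single i 1)) (MvPolynomial.coeff (Finsupp.single i 1) l)
          = MvPolynomial.C (MvPolynomial.coeff (Finsupp.single i 1) l) * MvPolynomial.X i := by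
        simp [MvPolynomial.monomial_eq]
      try simp only at this ⊢
      rw [this]
      simp only [map_mul, Phi, AlgHom.toRingHom_eq_coe, RingHom.coe_coe, MvPolynomial.aeval_C,
        MvPolynomial.aeval_X, MvPolynomial.algebraMap_eq, MvPolynomial.eval_mul,
        MvPolynomial.eval_C, MvPolynomial.eval_X, map_mul]
      have halg : ∀ a : ℂ, algebraMap ℂ (Polynomial MvP) a = Polynomial.C (MvPolynomial.C a) := by
        intro a
        rw [IsScalarTower.algebraMap_apply ℂ MvP (Polynomial MvP), MvPolynomial.algebraMap_eq,
          Polynomial.algebraMap_eq]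
      simp only [halg]
      ring)
  rwa [support_sum_monomial_coeff] at key

lemma coeff_zero_Phi (P : Fin 3 → ℂ) (p : MvP) :
    (Phi P p).coeff 0 = MvPolynomial.C (MvPolynomial.eval P p) := by
  have key : ((Polynomial.evalRingHom (0 : MvP)).comp (Phi P))
      = (MvPolynomial.C).comp (MvPolynomial.eval P) := by
    apply MvPolynomial.ringHom_ext
    · intro a; simp [Phi, MvPolynomial.algebraMap_eq]
    · intro i; simp [Phi]
  rw [Polynomial.coeff_zero_eq_eval_zero]
  exact congrArg (· p) key

lemma eval_one_Phi_zero (p : MvP) : Polynomial.eval 1 (Phi 0 p) = p := by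
  have key : ((Polynomial.evalRingHom (1 : MvP)).comp (Phi 0)) = RingHom.id MvP := by
    apply MvPolynomial.ringHom_ext
    · intro a; simp [Phi, MvPolynomial.algebraMap_eq]
    · intro i; simp [Phi]
  exact congrArg (· p) key

lemma eq_C_of_deg0 (a : MvP) (h : (Phi 0 a).natDegree = 0) :
    a = MvPolynomial.C (MvPolynomial.eval 0 a) := by
  have := Polynomial.eq_C_of_natDegree_eq_zero h
  have h1 := eval_one_Phi_zero a
  rw [this] at h1
  simp only [Polynomial.eval_C] at h1
  have h0 := coeff_zero_Phi 0 a
  rw [this] at h0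
  simp only [Polynomial.coeff_C_zero] at h0
  exact h1.symm.trans h0

lemma unit_eq_C (b : MvP) (hb : IsUnit b) : ∃ c : ℂ, c ≠ 0 ∧ b = MvPolynomial.C c := by
  have h0 : b ≠ 0 := hb.ne_zero
  have : (Phi 0 b).natDegree = 0 :=
    Polynomial.natDegree_eq_zero_of_isUnit (hb.map (Phi 0))
  refine ⟨MvPolynomial.eval 0 b, ?_, eq_C_of_deg0 b this⟩
  intro hc
  exact h0 (by rw [eq_C_of_deg0 b this, hc, map_zero])

lemma eval_zero_lin (l : MvP) (hl : l.IsHomogeneous 1) : MvPolynomial.eval 0 l = 0 := by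
  have h := hl.coeff_eq_zero (d := 0) (by simp [Finsupp.degree])
  calc MvPolynomial.eval 0 l = MvPolynomial.constantCoeff l := by
        simp [MvPolynomial.eval_eq', MvPolynomial.constantCoeff_eq]
    _ = 0 := h
  
lemma mul_eq_linear (l a b : MvP) (hl : l.IsHomogeneous 1) (hl0 : l ≠ 0)
    (hab : a * b = l) :
    (∃ c : ℂ, c ≠ 0 ∧ a = MvPolynomial.C c) ∨ (∃ c : ℂ, c ≠ 0 ∧ b = MvPolynomial.C c) := by
  have ha : a ≠ 0 := fun h => hl0 (by rw [← hab, h, zero_mul])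
  have hb : b ≠ 0 := fun h => hl0 (by rw [← hab, h, mul_zero])
  have hPa : Phi 0 a ≠ 0 := fun h => ha (by
    have := congrArg (Polynomial.eval 1) h
    rwa [eval_one_Phi_zero, Polynomial.eval_zero] at this)
  have hPb : Phi 0 b ≠ 0 := fun h => hb (by
    have := congrArg (Polynomial.eval 1) h
    rwa [eval_one_Phi_zero, Polynomial.eval_zero] at this)
  have hdeg : (Phi 0 a).natDegree + (Phi 0 b).natDegree = 1 := by
    rw [← Polynomial.natDegree_mul hPa hPb, ← map_mul, hab, Phi_linear 0 l hl,
      eval_zero_lin l hl, map_zero, map_zero, add_zero, Polynomial.natDegree_C_mul_X l hl0]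
  rcases Nat.eq_zero_or_pos (Phi 0 a).natDegree with h | h
  · left
    refine ⟨MvPolynomial.eval 0 a, ?_, eq_C_of_deg0 a h⟩
    intro hc; exact ha (by rw [eq_C_of_deg0 a h, hc, map_zero])
  · right
    have h' : (Phi 0 b).natDegree = 0 := by omega
    refine ⟨MvPolynomial.eval 0 b, ?_, eq_C_of_deg0 b h'⟩
    intro hc; exact hb (by rw [eq_C_of_deg0 b h', hc, map_zero])

lemma linear_prime (l : MvP) (hl : l.IsHomogeneous 1) (hl0 : l ≠ 0) : Prime l := by
  rw [← UniqueFactorizationMonoid.irreducible_iff_prime]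
  constructor
  · intro hu
    obtain ⟨c, hc, rfl⟩ := unit_eq_C l hu
    exact absurd ((MvPolynomial.isHomogeneous_C (Fin 3) c).inj_right hl hl0)
      (by omega)
  · intro a b hab
    rcases mul_eq_linear l a b hl hl0 hab.symm with ⟨c, hc, rfl⟩ | ⟨c, hc, rfl⟩
    · exact Or.inl (IsUnit.of_mul_eq_one (MvPolynomial.C c⁻¹)
        (by rw [← map_mul, mul_inv_cancel₀ hc, map_one]))
    · exact Or.inr (IsUnit.of_mul_eq_one (MvPolynomial.C c⁻¹)
        (by rw [← map_mul, mul_inv_cancel₀ hc, map_one]))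

lemma tc_C_mul_X (l : MvP) (hl : l ≠ 0) :
    (Polynomial.C l * Polynomial.X).natTrailingDegree = 1 ∧
      (Polynomial.C l * Polynomial.X).trailingCoeff = l := by
  rw [Polynomial.C_mul_X_eq_monomial]
  constructor
  · exact natTrailingDegree_monomial hl
  · rw [trailingCoeff, natTrailingDegree_monomial hl, Polynomial.coeff_monomial, if_pos rfl]

lemma tc_const_plus (l : MvP) (e : MvP) (he : e ≠ 0) :
    (Polynomial.C l * Polynomial.X + Polynomial.C e).natTrailingDegree = 0 ∧
      (Polynomial.C l * Polynomial.X + Polynomial.C e).trailingCoeff = e := by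
  have hc : (Polynomial.C l * Polynomial.X + Polynomial.C e).coeff 0 = e := by
    rw [Polynomial.coeff_add, Polynomial.coeff_C, if_pos rfl, Polynomial.coeff_mul_X_zero]
    simp
  have h0 : (Polynomial.C l * Polynomial.X + Polynomial.C e).natTrailingDegree = 0 :=
    Nat.le_zero.mp (natTrailingDegree_le_of_ne_zero (by rw [hc]; exact he))
  exact ⟨h0, by rw [trailingCoeff, h0, hc]⟩

lemma ntd_prod {ι : Type*} (s : Finset ι) (F : ι → Polynomial MvP)
    (h : ∀ j ∈ s, F j ≠ 0) :
    (∏ j ∈ s, F j).natTrailingDegree = ∑ j ∈ s, (F j).natTrailingDegree := by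
  classical
  induction s using Finset.induction_on with
  | empty => simp
  | @insert a s' hx ih =>
    rw [Finset.prod_insert hx, Finset.sum_insert hx,
      natTrailingDegree_mul (h a (Finset.mem_insert_self a s'))
        (Finset.prod_ne_zero_iff.mpr fun j hj => h j (Finset.mem_insert_of_mem hj)),
      ih fun j hj => h j (Finset.mem_insert_of_mem hj)]

lemma tc_prod {ι : Type*} (s : Finset ι) (F : ι → Polynomial MvP) :
    (∏ j ∈ s, F j).trailingCoeff = ∏ j ∈ s, (F j).trailingCoeff := by
  classical
  induction s using Finset.induction_on with
  | empty => simp [trailingCoeff, Polynomial.coeff_one]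
  | @insert a s' hx ih =>
    rw [Finset.prod_insert hx, Finset.prod_insert hx, trailingCoeff_mul, ih]

lemma ntd_cube (u : Polynomial MvP) (hu : u ≠ 0) :
    (u ^ 3).natTrailingDegree = 3 * u.natTrailingDegree := by
  have h3 : u ^ 3 = u * (u * u) := by ring
  rw [h3, natTrailingDegree_mul hu (mul_ne_zero hu hu), natTrailingDegree_mul hu hu]
  ring

lemma tc_cube (u : Polynomial MvP) : (u ^ 3).trailingCoeff = u.trailingCoeff ^ 3 := by
  have h3 : u ^ 3 = u * (u * u) := by ring
  rw [h3, trailingCoeff_mul, trailingCoeff_mul]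
  ring

lemma kill (q₁ q₂ q₃ : Polynomial MvP) (h1 : q₁ ≠ 0) (hsum : q₁ + q₂ + q₃ = 0)
    (h2 : q₁.natTrailingDegree < q₂.natTrailingDegree)
    (h3 : q₁.natTrailingDegree < q₃.natTrailingDegree) : False := by
  have hc : q₁.coeff q₁.natTrailingDegree + q₂.coeff q₁.natTrailingDegree
      + q₃.coeff q₁.natTrailingDegree = 0 := by
    have := congrArg (fun r => Polynomial.coeff r q₁.natTrailingDegree) hsum
    simpa [Polynomial.coeff_add] using this
  rw [coeff_eq_zero_of_lt_natTrailingDegree h2, coeff_eq_zero_of_lt_natTrailingDegree h3,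
    add_zero, add_zero] at hc
  exact trailingCoeff_nonzero_iff_nonzero.mpr h1 hc

lemma vmin (q₁ q₂ q₃ : Polynomial MvP) (h1 : q₁ ≠ 0) (h2 : q₂ ≠ 0) (h3 : q₃ ≠ 0)
    (hsum : q₁ + q₂ + q₃ = 0)
    (h13 : q₁.natTrailingDegree ≠ q₃.natTrailingDegree)
    (h23 : q₂.natTrailingDegree ≠ q₃.natTrailingDegree) :
    q₁.natTrailingDegree = q₂.natTrailingDegree ∧
      q₁.trailingCoeff + q₂.trailingCoeff = 0 := by
  have hs2 : q₂ + q₁ + q₃ = 0 := by linear_combination hsum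
  have hs3 : q₃ + q₁ + q₂ = 0 := by linear_combination hsum
  rcases lt_trichotomy q₁.natTrailingDegree q₂.natTrailingDegree with hlt | heq | hgt
  · rcases lt_trichotomy q₁.natTrailingDegree q₃.natTrailingDegree with hlt' | heq' | hgt'
    · exact absurd (kill q₁ q₂ q₃ h1 hsum hlt hlt') id
    · exact absurd heq' h13
    · exact absurd (kill q₃ q₁ q₂ h3 hs3 hgt' (hgt'.trans hlt)) id
  · rcases lt_trichotomy q₁.natTrailingDegree q₃.natTrailingDegree with hlt' | heq' | hgt'
    · refine ⟨heq, ?_⟩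
      have hc : q₁.coeff q₁.natTrailingDegree + q₂.coeff q₁.natTrailingDegree
          + q₃.coeff q₁.natTrailingDegree = 0 := by
        have := congrArg (fun r => Polynomial.coeff r q₁.natTrailingDegree) hsum
        simpa [Polynomial.coeff_add] using this
      rw [coeff_eq_zero_of_lt_natTrailingDegree hlt', add_zero] at hc
      rw [trailingCoeff, trailingCoeff, ← heq]
      exact hc
    · exact absurd heq' h13
    · exact absurd (kill q₃ q₁ q₂ h3 hs3 hgt' (heq ▸ hgt')) id
  · rcases lt_trichotomy q₂.natTrailingDegree q₃.natTrailingDegree with hlt' | heq' | hgt'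
    · exact absurd (kill q₂ q₁ q₃ h2 hs2 hgt hlt') id
    · exact absurd heq' h23
    · exact absurd (kill q₃ q₁ q₂ h3 hs3 (hgt'.trans hgt) hgt') id

lemma isUnit_Cne (c : ℂ) (hc : c ≠ 0) : IsUnit (MvPolynomial.C c : MvP) :=
  IsUnit.of_mul_eq_one (MvPolynomial.C c⁻¹)
    (by rw [← map_mul, mul_inv_cancel₀ hc, map_one])

lemma not_dvd_C (l : MvP) (hp : Prime l) (c : ℂ) (hc : c ≠ 0) : ¬ l ∣ MvPolynomial.C c :=
  fun hdvd => hp.not_unit (isUnit_of_dvd_unit hdvd (isUnit_Cne c hc))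

lemma not_dvd_lin (l₁ l₂ : MvP) (h1 : l₁.IsHomogeneous 1) (h2 : l₂.IsHomogeneous 1)
    (h10 : l₁ ≠ 0) (h20 : l₂ ≠ 0) (hnp : ∀ c : ℂ, l₂ ≠ MvPolynomial.C c * l₁) :
    ¬ l₁ ∣ l₂ := by
  rintro ⟨b, hb⟩
  rcases mul_eq_linear l₂ l₁ b h2 h20 hb.symm with ⟨c, hc, hlc⟩ | ⟨c, hc, rfl⟩
  · exact (linear_prime l₁ h1 h10).not_unit (hlc ▸ isUnit_Cne c hc)
  · exact hnp c (by rw [hb]; ring)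

lemma cube_clash (l₁ l₂ : MvP) (hp : Prime l₁) (h2 : l₂ ≠ 0) (hnd : ¬ l₁ ∣ l₂)
    (c₁ c₂ : ℂ) (hc₁ : c₁ ≠ 0) (hc₂ : c₂ ≠ 0) (F G : MvP) (hF : F ≠ 0) (hG : G ≠ 0)
    (heq : l₁ * MvPolynomial.C c₁ * F ^ 3 + l₂ * MvPolynomial.C c₂ * G ^ 3 = 0) : False := by
  have heq' : l₁ * (MvPolynomial.C c₁ * F ^ 3) = l₂ * (MvPolynomial.C (-c₂) * G ^ 3) := by
    rw [map_neg]; linear_combination heq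
  have hfinF := FiniteMultiplicity.of_prime_left hp hF
  have hfinG := FiniteMultiplicity.of_prime_left hp hG
  have hfinl := FiniteMultiplicity.of_prime_left hp hp.ne_zero
  have e1 : emultiplicity l₁ (l₁ * (MvPolynomial.C c₁ * F ^ 3))
      = 1 + 3 * multiplicity l₁ F := by
    rw [emultiplicity_mul hp, emultiplicity_mul hp, emultiplicity_pow hp,
      hfinl.emultiplicity_self, emultiplicity_eq_zero.mpr (not_dvd_C l₁ hp c₁ hc₁),
      hfinF.emultiplicity_eq_multiplicity]
    push_cast
    ring
  have e2 : emultiplicity l₁ (l₂ * (MvPolynomial.C (-c₂) * G ^ 3))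
      = 3 * multiplicity l₁ G := by
    rw [emultiplicity_mul hp, emultiplicity_mul hp, emultiplicity_pow hp,
      emultiplicity_eq_zero.mpr hnd,
      emultiplicity_eq_zero.mpr (not_dvd_C l₁ hp (-c₂) (neg_ne_zero.mpr hc₂)),
      hfinG.emultiplicity_eq_multiplicity]
    push_cast
    ring
  rw [heq', e2] at e1
  have : (3 * multiplicity l₁ G : ℕ) = 1 + 3 * multiplicity l₁ F := by
    exact_mod_cast e1
  omega

lemma key
    (n : ℕ) (L : Fin n → MvPolynomial (Fin 3) ℂ)
    (hL0 : ∀ i, L i ≠ 0)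
    (hL1 : ∀ i, (L i).IsHomogeneous 1)
    (hprop : ∀ i j, i ≠ j → ∀ c : ℂ, L i ≠ MvPolynomial.C c * L j)
    (S₀ S₁ S₂ : Finset (Fin n)) (d01 : Disjoint S₀ S₁)
    (f g h : MvPolynomial (Fin 3) ℂ)
    (hf : f ≠ 0) (hg : g ≠ 0) (hh : h ≠ 0)
    (heq : (∏ j ∈ S₀, L j) * f ^ 3 + (∏ j ∈ S₁, L j) * g ^ 3
      + (∏ j ∈ S₂, L j) * h ^ 3 = 0)
    (P : Fin 3 → ℂ)
    (hmult : (Finset.univ.filter fun i => MvPolynomial.eval P (L i) = 0).card ≤ 3)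
    (h₀ : MvPolynomial.eval P (∏ j ∈ S₀, L j) = 0)
    (h₁ : MvPolynomial.eval P (∏ j ∈ S₁, L j) = 0) :
    MvPolynomial.eval P (∏ j ∈ S₂, L j) = 0 := by
  classical
  by_contra hA2
  -- basic nonvanishing
  have hprodne : ∀ s : Finset (Fin n), (∏ j ∈ s, L j) ≠ 0 :=
    fun s => Finset.prod_ne_zero_iff.mpr fun j _ => hL0 j
  have hPhine : ∀ p : MvP, p ≠ 0 → Phi P p ≠ 0 := by
    intro p hp hc
    exact hp (Phi_inj P (by rw [hc, map_zero]))
  -- the filtered sets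
  set T₀ := S₀.filter (fun j => MvPolynomial.eval P (L j) = 0) with hT₀
  set T₁ := S₁.filter (fun j => MvPolynomial.eval P (L j) = 0) with hT₁
  have hm₀pos : 0 < T₀.card := by
    rw [map_prod] at h₀
    obtain ⟨j, hj, hjz⟩ := Finset.prod_eq_zero_iff.mp h₀
    exact Finset.card_pos.mpr ⟨j, Finset.mem_filter.mpr ⟨hj, hjz⟩⟩
  have hm₁pos : 0 < T₁.card := by
    rw [map_prod] at h₁
    obtain ⟨j, hj, hjz⟩ := Finset.prod_eq_zero_iff.mp h₁
    exact Finset.card_pos.mpr ⟨j, Finset.mem_filter.mpr ⟨hj, hjz⟩⟩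
  have hm01 : T₀.card + T₁.card ≤ 3 := by
    have hd : Disjoint T₀ T₁ :=
      Finset.disjoint_filter_filter d01
    rw [← Finset.card_union_of_disjoint hd]
    refine le_trans (Finset.card_le_card ?_) hmult
    intro j hj
    rcases Finset.mem_union.mp hj with hj' | hj' <;>
      exact Finset.mem_filter.mpr ⟨Finset.mem_univ j, (Finset.mem_filter.mp hj').2⟩
  -- trailing degree of Phi of a linear form
  have hlin : ∀ j : Fin n, (Phi P (L j)).natTrailingDegree
      = (if MvPolynomial.eval P (L j) = 0 then 1 else 0) := by
    intro j
    by_cases hz : MvPolynomial.eval P (L j) = 0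
    · rw [if_pos hz]
      have := Phi_linear P (L j) (hL1 j)
      rw [hz, map_zero, map_zero, add_zero] at this
      rw [this]
      exact (tc_C_mul_X (L j) (hL0 j)).1
    · rw [if_neg hz, Phi_linear P (L j) (hL1 j)]
      exact (tc_const_plus (L j) _ (fun hc => hz (by
        have : Function.Injective (MvPolynomial.C : ℂ → MvP) := MvPolynomial.C_injective _ _
        exact this (by rw [hc, map_zero])))).1
  have htc : ∀ j : Fin n, (Phi P (L j)).trailingCoeff
      = (if MvPolynomial.eval P (L j) = 0 then L j
        else MvPolynomial.C (MvPolynomial.eval P (L j))) := by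
    intro j
    by_cases hz : MvPolynomial.eval P (L j) = 0
    · rw [if_pos hz]
      have := Phi_linear P (L j) (hL1 j)
      rw [hz, map_zero, map_zero, add_zero] at this
      rw [this]
      exact (tc_C_mul_X (L j) (hL0 j)).2
    · rw [if_neg hz, Phi_linear P (L j) (hL1 j)]
      exact (tc_const_plus (L j) _ (fun hc => hz (by
        have : Function.Injective (MvPolynomial.C : ℂ → MvP) := MvPolynomial.C_injective _ _
        exact this (by rw [hc, map_zero])))).2
  -- natTrailingDegree of the products
  have hntdS : ∀ s : Finset (Fin n), (Phi P (∏ j ∈ s, L j)).natTrailingDegree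
      = (s.filter (fun j => MvPolynomial.eval P (L j) = 0)).card := by
    intro s
    rw [map_prod, ntd_prod s _ (fun j _ => hPhine _ (hL0 j))]
    rw [Finset.card_filter]
    exact Finset.sum_congr rfl (fun j _ => hlin j)
  -- the three terms
  set q₁ := Phi P (∏ j ∈ S₀, L j) * (Phi P f) ^ 3 with hq₁
  set q₂ := Phi P (∏ j ∈ S₁, L j) * (Phi P g) ^ 3 with hq₂
  set q₃ := Phi P (∏ j ∈ S₂, L j) * (Phi P h) ^ 3 with hq₃
  have hq₁ne : q₁ ≠ 0 := mul_ne_zero (hPhine _ (hprodne S₀)) (pow_ne_zero _ (hPhine _ hf))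
  have hq₂ne : q₂ ≠ 0 := mul_ne_zero (hPhine _ (hprodne S₁)) (pow_ne_zero _ (hPhine _ hg))
  have hq₃ne : q₃ ≠ 0 := mul_ne_zero (hPhine _ (hprodne S₂)) (pow_ne_zero _ (hPhine _ hh))
  have hsum : q₁ + q₂ + q₃ = 0 := by
    have := congrArg (Phi P) heq
    simpa only [map_add, map_mul, map_pow, map_zero] using this
  have hv₁ : q₁.natTrailingDegree = T₀.card + 3 * (Phi P f).natTrailingDegree := by
    rw [hq₁, natTrailingDegree_mul (hPhine _ (hprodne S₀)) (pow_ne_zero _ (hPhine _ hf)),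
      ntd_cube _ (hPhine _ hf), hntdS S₀]
  have hv₂ : q₂.natTrailingDegree = T₁.card + 3 * (Phi P g).natTrailingDegree := by
    rw [hq₂, natTrailingDegree_mul (hPhine _ (hprodne S₁)) (pow_ne_zero _ (hPhine _ hg)),
      ntd_cube _ (hPhine _ hg), hntdS S₁]
  have hv₃ : q₃.natTrailingDegree = 3 * (Phi P h).natTrailingDegree := by
    have h0 : (Phi P (∏ j ∈ S₂, L j)).natTrailingDegree = 0 := by
      refine Nat.le_zero.mp (natTrailingDegree_le_of_ne_zero ?_)
      rw [coeff_zero_Phi]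
      intro hc
      exact hA2 ((MvPolynomial.C_injective _ _) (by rw [hc, map_zero]))
    rw [hq₃, natTrailingDegree_mul (hPhine _ (hprodne S₂)) (pow_ne_zero _ (hPhine _ hh)),
      ntd_cube _ (hPhine _ hh), h0, zero_add]
  -- apply vmin
  obtain ⟨hveq, htceq⟩ := vmin q₁ q₂ q₃ hq₁ne hq₂ne hq₃ne hsum
    (by rw [hv₁, hv₃]; omega) (by rw [hv₂, hv₃]; omega)
  have hm1 : T₀.card = 1 ∧ T₁.card = 1 := by
    rw [hv₁, hv₂] at hveq
    omega
  -- extract the single linear forms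
  obtain ⟨j₀, hj₀⟩ := Finset.card_eq_one.mp hm1.1
  obtain ⟨j₁, hj₁⟩ := Finset.card_eq_one.mp hm1.2
  have hj₀S : j₀ ∈ S₀ ∧ MvPolynomial.eval P (L j₀) = 0 := by
    have : j₀ ∈ T₀ := hj₀ ▸ Finset.mem_singleton_self j₀
    exact ⟨(Finset.mem_filter.mp this).1, (Finset.mem_filter.mp this).2⟩
  have hj₁S : j₁ ∈ S₁ ∧ MvPolynomial.eval P (L j₁) = 0 := by
    have : j₁ ∈ T₁ := hj₁ ▸ Finset.mem_singleton_self j₁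
    exact ⟨(Finset.mem_filter.mp this).1, (Finset.mem_filter.mp this).2⟩
  have hj01 : j₀ ≠ j₁ := by
    intro hc
    exact Finset.disjoint_left.mp d01 hj₀S.1 (hc ▸ hj₁S.1)
  -- trailing coefficients of q₁ and q₂
  set c₀ := ∏ j ∈ S₀.filter (fun j => ¬ MvPolynomial.eval P (L j) = 0),
    MvPolynomial.eval P (L j) with hc₀
  set c₁ := ∏ j ∈ S₁.filter (fun j => ¬ MvPolynomial.eval P (L j) = 0),
    MvPolynomial.eval P (L j) with hc₁
  have hc₀ne : c₀ ≠ 0 := Finset.prod_ne_zero_iff.mpr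
    (fun j hj => (Finset.mem_filter.mp hj).2)
  have hc₁ne : c₁ ≠ 0 := Finset.prod_ne_zero_iff.mpr
    (fun j hj => (Finset.mem_filter.mp hj).2)
  have htcS : ∀ (s : Finset (Fin n)) (j' : Fin n),
      s.filter (fun j => MvPolynomial.eval P (L j) = 0) = {j'} →
      (Phi P (∏ j ∈ s, L j)).trailingCoeff = L j' * MvPolynomial.C
        (∏ j ∈ s.filter (fun j => ¬ MvPolynomial.eval P (L j) = 0),
          MvPolynomial.eval P (L j)) := by
    intro s j' hs
    rw [map_prod, tc_prod]
    rw [← Finset.prod_filter_mul_prod_filter_not s (fun j => MvPolynomial.eval P (L j) = 0)]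
    congr 1
    · rw [hs, Finset.prod_singleton, htc j']
      have : MvPolynomial.eval P (L j') = 0 := by
        have : j' ∈ s.filter (fun j => MvPolynomial.eval P (L j) = 0) :=
          hs ▸ Finset.mem_singleton_self j'
        exact (Finset.mem_filter.mp this).2
      rw [if_pos this]
    · rw [map_prod]
      refine Finset.prod_congr rfl (fun j hj => ?_)
      rw [htc j, if_neg (Finset.mem_filter.mp hj).2]
  -- the final equation
  have htc₁ : q₁.trailingCoeff = L j₀ * MvPolynomial.C c₀ * (Phi P f).trailingCoeff ^ 3 := by
    rw [hq₁, trailingCoeff_mul, tc_cube, htcS S₀ j₀ hj₀]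
  have htc₂ : q₂.trailingCoeff = L j₁ * MvPolynomial.C c₁ * (Phi P g).trailingCoeff ^ 3 := by
    rw [hq₂, trailingCoeff_mul, tc_cube, htcS S₁ j₁ hj₁]
  rw [htc₁, htc₂] at htceq
  exact cube_clash (L j₀) (L j₁) (linear_prime (L j₀) (hL1 j₀) (hL0 j₀)) (hL0 j₁)
    (not_dvd_lin (L j₀) (L j₁) (hL1 j₀) (hL1 j₁) (hL0 j₀) (hL0 j₁)
      (fun c => hprop j₁ j₀ hj01.symm c))
    c₀ c₁ hc₀ne hc₁ne _ _
    (trailingCoeff_nonzero_iff_nonzero.mpr (hPhine _ hf))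
    (trailingCoeff_nonzero_iff_nonzero.mpr (hPhine _ hg)) htceq


end CatalanAux

/-- if the Catalan equation `A₁f³ + A₂g³ + A₃h³ = 0` with `A₁` nonconstant and
coefficients products of pairwise non-proportional linear forms (the arrangement having only
points of multiplicity 2 and 3) has a solution in nonzero homogeneous polynomials, then every
intersection point of the curve `A₁ = 0` with one of the curves `A₂ = 0`, `A₃ = 0` also lies on
the other. -/
theorem stmt6
    (n : ℕ) (L : Fin n → MvPolynomial (Fin 3) ℂ)
    (hL0 : ∀ i, L i ≠ 0)
    (hL1 : ∀ i, (L i).IsHomogeneous 1)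
    (hprop : ∀ i j, i ≠ j → ∀ c : ℂ, L i ≠ C c * L j)
    (hmult : ∀ P : Fin 3 → ℂ, P ≠ 0 →
      (Finset.univ.filter fun i => MvPolynomial.eval P (L i) = 0).card ≤ 3)
    (S : Fin 3 → Finset (Fin n))
    (hdisj : ∀ i j, i ≠ j → Disjoint (S i) (S j))
    (hcover : S 0 ∪ S 1 ∪ S 2 = Finset.univ)
    (A : Fin 3 → MvPolynomial (Fin 3) ℂ)
    (hA : ∀ i, A i = ∏ j ∈ S i, L j)
    (hA1nc : ∀ c : ℂ, A 0 ≠ C c)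
    (f g h : MvPolynomial (Fin 3) ℂ)
    (hf : f ≠ 0) (hg : g ≠ 0) (hh : h ≠ 0)
    (hfhom : ∃ d, f.IsHomogeneous d)
    (hghom : ∃ d, g.IsHomogeneous d)
    (hhhom : ∃ d, h.IsHomogeneous d)
    (heq : A 0 * f ^ 3 + A 1 * g ^ 3 + A 2 * h ^ 3 = 0) :
    ∀ P : Fin 3 → ℂ, P ≠ 0 →
      (MvPolynomial.eval P (A 0) = 0 → MvPolynomial.eval P (A 1) = 0 →
        MvPolynomial.eval P (A 2) = 0) ∧
      (MvPolynomial.eval P (A 0) = 0 → MvPolynomial.eval P (A 2) = 0 →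
        MvPolynomial.eval P (A 1) = 0) := by
  intro P hP
  have heqA : A 0 * f ^ 3 + A 1 * g ^ 3 + A 2 * h ^ 3 = 0 := heq
  rw [hA 0, hA 1, hA 2] at heqA
  constructor
  · intro h0 h1
    rw [hA 0] at h0
    rw [hA 1] at h1
    rw [hA 2]
    exact key n L hL0 hL1 hprop (S 0) (S 1) (S 2) (hdisj 0 1 (by decide)) f g h hf hg hh
      heqA P (hmult P hP) h0 h1
  · intro h0 h2
    rw [hA 0] at h0
    rw [hA 2] at h2
    rw [hA 1]
    exact key n L hL0 hL1 hprop (S 0) (S 2) (S 1) (hdisj 0 2 (by decide)) f h g hf hh hg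
      (by linear_combination heqA) P (hmult P hP) h0 h2
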